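/- arXiv:1106.5915 — 2 statements merged into one kernel-verified Lean document; each statement's English description precedes it below -/
import Mathlib

section
/- Sufficient condition for a.e. continuity of the conditional expectation (Proposition 4.4). Let H: D×D→ℝ be product-measurable, satisfy condition (f1), and suppose that for each w∈D the function H(w,·) is continuous from below on {τ_0(w')<∞} a.s. P_z for every z∈ℝ, i.e. lim_{ε↓0} H(w, w'−c^ε) = H(w,w') a.s. P_z on {τ_0(w')<∞}, where τ_0(w')=inf{t>0: w'_t>0}. Then condition (f2) holds: for every w∈D the function z ↦ G(w,z)=E_z[H(w,X); τ(0)<∞] is continuous at all but countably many z∈ℝ, hence continuous Lebesgue-a.e. -/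
open MeasureTheory ProbabilityTheory Filter Set Real
open scoped ENNReal NNReal

noncomputable section

namespace GriffinMaller

/-! ### Convolution equivalent distributions -/

/-- Convolution of two measures on `ℝ`. -/
def mconv (m₁ m₂ : Measure ℝ) : Measure ℝ :=
  (m₁.prod m₂).map fun p => p.1 + p.2

/-- The (real-valued) tail of a measure on `ℝ`. -/
def mtail (m : Measure ℝ) (u : ℝ) : ℝ := (m (Set.Ioi u)).toReal

/-- A probability distribution on `[0,∞)` belongs to the convolution equivalent class
`S^(α)`: its tail is everywhere positive, `F̄(u+x)/F̄(u) → e^{-αx}` and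
`F̄^{2*}(u)/F̄(u)` converges to a finite limit as `u → ∞`. -/
def IsConvEquiv (α : ℝ) (m : Measure ℝ) : Prop :=
  IsProbabilityMeasure m ∧ m (Set.Iio 0) = 0 ∧ (∀ u : ℝ, 0 < mtail m u) ∧
    (∀ x : ℝ, Tendsto (fun u => mtail m (u + x) / mtail m u) atTop
      (nhds (Real.exp (-α * x)))) ∧
    ∃ L : ℝ, Tendsto (fun u => mtail (mconv m m) u / mtail m u) atTop (nhds L)

/-- A nonnegative tail function `T` (e.g. the tail of a Lévy measure) is in `S^(α)`:
it is tail equivalent to a convolution equivalent probability distribution on `[0,∞)`.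
(The class `S^(α)` is closed under tail equivalence.) -/
def TailInSalpha (α : ℝ) (T : ℝ → ℝ) : Prop :=
  ∃ m : Measure ℝ, IsConvEquiv α m ∧
    ∃ c : ℝ, 0 < c ∧ Tendsto (fun u => T u / mtail m u) atTop (nhds c)

/-! ### Path functionals -/

/-- The path of the process at a sample point. -/
def path {Ω : Type*} (X : ℝ → Ω → ℝ) (ω : Ω) : ℝ → ℝ := fun t => X t ω

/-- Càdlàg on `[0,∞)`: right continuous with left limits. -/
def Cadlag (w : ℝ → ℝ) : Prop :=
  (∀ t : ℝ, 0 ≤ t → ContinuousWithinAt w (Set.Ici t) t) ∧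
    ∀ t : ℝ, 0 < t → ∃ l : ℝ, Tendsto w (nhdsWithin t (Set.Iio t)) (nhds l)

/-- Running supremum `w̄_t = sup_{0 ≤ s ≤ t} w_s`. -/
def runSup (w : ℝ → ℝ) (t : ℝ) : ℝ := sSup (w '' Set.Icc 0 t)

/-- Supremum `w̄_{t-}` over `[0,t)` (with the convention `w̄_{0-} = w_0`). -/
def preSup (w : ℝ → ℝ) (t : ℝ) : ℝ := sSup (w '' insert 0 (Set.Ico 0 t))

/-- The left limit `w_{t-}` (with the convention `w_{0-} = w_0`). -/
def preVal (w : ℝ → ℝ) (t : ℝ) : ℝ := if 0 < t then Function.leftLim w t else w 0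

/-- `G_{t-}`, the last time on `[0,t)` at which the path attains its running maximum
(with the convention `G_{0-} = 0`). -/
def lastMaxPre (w : ℝ → ℝ) (t : ℝ) : ℝ := sSup {s | 0 ≤ s ∧ s < t ∧ w s = runSup w s}

/-- First passage time of a path strictly above the level `0`. -/
def tauP (w : ℝ → ℝ) : ℝ := sInf {t | 0 ≤ t ∧ 0 < w t}

/-! ### Lévy processes -/

variable {Ω : Type*} [MeasurableSpace Ω]

/-- `X` is a Lévy process under the probability measure `P`: it starts at `0`, has
a.s. càdlàg paths and stationary, (mutually) independent increments. -/
structure IsLevy (P : Measure Ω) (X : ℝ → Ω → ℝ) : Prop where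
  isProb : IsProbabilityMeasure P
  meas : ∀ t, Measurable (X t)
  negTimes : ∀ t : ℝ, t ≤ 0 → ∀ ω, X t ω = X 0 ω
  init : ∀ᵐ ω ∂P, X 0 ω = 0
  cadlag : ∀ᵐ ω ∂P, Cadlag (path X ω)
  stationary : ∀ s t : ℝ, 0 ≤ s → 0 ≤ t →
    Measure.map (fun ω => X (s + t) ω - X s ω) P = Measure.map (X t) P
  indepIncr : ∀ (n : ℕ) (a : ℕ → ℝ), (∀ i, 0 ≤ a i) → Monotone a →
    iIndepFun (m := fun _ : Fin n => (inferInstance : MeasurableSpace ℝ))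
      (fun i ω => X (a (i.1 + 1)) ω - X (a i.1) ω) P

/-- `X` is not the negative of a subordinator. -/
def NotNegSubordinator (P : Measure Ω) (X : ℝ → Ω → ℝ) : Prop :=
  ¬ ∀ᵐ ω ∂P, ∀ s t : ℝ, 0 ≤ s → s ≤ t → X t ω ≤ X s ω

/-- Expected number of jumps of size `> x` during the time interval `(0,1]`; for
`x > 0` this is the tail `Π̄⁺_X(x)` of the Lévy measure of `X`. -/
def jumpTailE (P : Measure Ω) (X : ℝ → Ω → ℝ) (x : ℝ) : ℝ≥0∞ :=
  ∫⁻ ω, Measure.count {t : ℝ | t ∈ Set.Ioc (0:ℝ) 1 ∧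
    x < X t ω - Function.leftLim (path X ω) t} ∂P

/-- The tail `Π̄⁺_X` of the Lévy measure, as a real-valued function. -/
def jumpTail (P : Measure Ω) (X : ℝ → Ω → ℝ) (x : ℝ) : ℝ := (jumpTailE P X x).toReal

/-- `ν` is (the restriction to `(0,∞)` of) the Lévy measure of `X`. -/
def IsPosLevyMeasure (P : Measure Ω) (X : ℝ → Ω → ℝ) (ν : Measure ℝ) : Prop :=
  ν (Set.Iic 0) = 0 ∧ ∀ x : ℝ, 0 < x → ν (Set.Ioi x) = jumpTailE P X x

/-! ### Ruin quantities -/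

/-- Ruin event `{τ(u) < ∞}`. -/
def ruinSet (X : ℝ → Ω → ℝ) (u : ℝ) : Set Ω := {ω | ∃ t, 0 ≤ t ∧ u < X t ω}

/-- Ruin time `τ(u) = inf{t ≥ 0 : X_t > u}` (junk value on `{τ(u) = ∞}`). -/
def tauT (X : ℝ → Ω → ℝ) (u : ℝ) (ω : Ω) : ℝ := sInf {t | 0 ≤ t ∧ u < X t ω}

/-- The conditional probability measure `P^{(u)} = P(· | τ(u) < ∞)`. -/
def condRuin (P : Measure Ω) (X : ℝ → Ω → ℝ) (u : ℝ) : Measure Ω :=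
  ProbabilityTheory.cond P (ruinSet X u)

/-- The event `{τ(0) < ∞}` for the process started at `z`. -/
def shiftRuin (X : ℝ → Ω → ℝ) (z : ℝ) : Set Ω := {ω | ∃ s, 0 ≤ s ∧ 0 < z + X s ω}

/-- The constant `c₁ = -log E e^{α X_1}`. -/
def c1 (P : Measure Ω) (X : ℝ → Ω → ℝ) (α : ℝ) : ℝ :=
  -Real.log (∫ ω, Real.exp (α * X 1 ω) ∂P)

/-- The constant `c₂ = (1 + α ∫_0^∞ e^{α z} P(τ(z) < ∞) dz)⁻¹`. -/
def c2 (P : Measure Ω) (X : ℝ → Ω → ℝ) (α : ℝ) : ℝ :=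
  (1 + α * ∫ z in Set.Ioi (0:ℝ), Real.exp (α * z) * (P (ruinSet X z)).toReal)⁻¹

/-- The standing assumption: `X` is a Lévy process, not the negative of a subordinator,
`Π̄⁺_X ∈ S^(α)` and `E e^{α X_1} < 1` for some `α > 0`. -/
structure Standing (P : Measure Ω) (X : ℝ → Ω → ℝ) (α : ℝ) : Prop where
  levy : IsLevy P X
  notNegSub : NotNegSubordinator P X
  posAlpha : 0 < α
  tailS : TailInSalpha α (jumpTail P X)
  expInt : Integrable (fun ω => Real.exp (α * X 1 ω)) P
  expLT : ∫ ω, Real.exp (α * X 1 ω) ∂P < 1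

/-! ### Killed paths: the Skorohod space with cemetery state

Here `EReal` serves as `ℝ ∪ {Δ}`, with `⊥` playing the role of the cemetery `Δ`. -/

/-- The path `w` killed at time `r`. -/
def kill (w : ℝ → ℝ) (r : ℝ) : ℝ → EReal := fun t => if t < r then (w t : EReal) else ⊥

/-- A real path viewed as a never-killed path in the extended state space. -/
def alive (w : ℝ → ℝ) : ℝ → EReal := fun t => (w t : EReal)

/-- Death time `τ_Δ` of a killed path. -/
def deathTime (v : ℝ → EReal) : ℝ := sInf {t | 0 < t ∧ v t = ⊥}

/-- The value `w_{τ_Δ(w)-}` of a killed path immediately prior to its death time. -/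
def preDeath (v : ℝ → EReal) : ℝ :=
  Function.leftLim (fun t => (v t).toReal) (deathTime v)

/-- `G(w,z) = E_z[H(w,X); τ(0) < ∞]`. -/
def GFun (P : Measure Ω) (X : ℝ → Ω → ℝ)
    (H : (ℝ → EReal) → (ℝ → EReal) → ℝ) (v : ℝ → EReal) (z : ℝ) : ℝ :=
  ∫ ω in shiftRuin X z, H v (alive fun t => z + X t ω) ∂P

/-- The class `𝓗` of functionals `H` on pairs of killed paths: product measurable,
satisfying the growth condition (f1) (note `e^{θ w⁻ 1(w⁻ ≤ 0)} = e^{θ min(w⁻,0)}`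
where `w⁻ = w_{τ_Δ(w)-}`), and the a.e. continuity condition (f2) on
`G(w,z) = E_z[H(w,X); τ(0) < ∞]`. -/
structure MemH (P : Measure Ω) (X : ℝ → Ω → ℝ) (α : ℝ)
    (H : (ℝ → EReal) → (ℝ → EReal) → ℝ) : Prop where
  meas : Measurable (Function.uncurry H)
  f1 : ∃ θ : ℝ, 0 ≤ θ ∧ θ < α ∧ ∃ C : ℝ, ∀ v v' : ℝ → EReal,
    |H v v'| * Real.exp (θ * min (preDeath v) 0) ≤ C
  f2 : ∀ v : ℝ → EReal, ∀ᵐ z ∂(volume : Measure ℝ), ContinuousAt (GFun P X H v) z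

/-- The post-passage path `t ↦ X_{τ(u-x)+t} - u`. -/
def postPath (X : ℝ → Ω → ℝ) (u x : ℝ) (ω : Ω) : ℝ → ℝ :=
  fun t => X (tauT X (u - x) ω + t) ω - u

/-! ### The limit objects `ρ`, `Z`, `W` -/

/-- The exponential distribution with parameter `r`. -/
def expMeasure (r : ℝ) : Measure ℝ :=
  (volume.restrict (Set.Ici (0:ℝ))).withDensity fun t => ENNReal.ofReal (r * Real.exp (-r * t))

/-- The law of the process `W`:
`P(W ∈ dw) = c₂ ∫_ℝ α e^{-α z} P_z(X ∈ dw ; τ(0) < ∞) dz`. -/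
def lawW (P : Measure Ω) (X : ℝ → Ω → ℝ) (α : ℝ) : Measure (ℝ → ℝ) :=
  Measure.bind
    ((volume : Measure ℝ).withDensity fun z =>
      ENNReal.ofReal (c2 P X α * α * Real.exp (-α * z)))
    fun z => Measure.map (fun ω => fun t => z + X t ω) (P.restrict (shiftRuin X z))

/-- `Z` is the Esscher transform of `X`: for each `s ≥ 0` the law of the stopped path
`Z_{· ∧ s}` has density `e^{c₁ s} e^{α X_s}` with respect to the law of `X_{· ∧ s}`. -/
def IsEsscher (P : Measure Ω) (X : ℝ → Ω → ℝ) (α : ℝ)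
    {Ω' : Type*} [MeasurableSpace Ω'] (P' : Measure Ω') (Z : ℝ → Ω' → ℝ) : Prop :=
  ∀ s : ℝ, 0 ≤ s →
    Measure.map (fun ω' => fun t => Z (min t s) ω') P' =
      Measure.map (fun ω => fun t => X (min t s) ω)
        (P.withDensity fun ω => ENNReal.ofReal (Real.exp (c1 P X α * s + α * X s ω)))

/-- The triple `(ρ, Z, W)` of (mutually independent) limit objects, realized on an
auxiliary probability space `(Ω', P')`. -/
structure LimitObjects (P : Measure Ω) (X : ℝ → Ω → ℝ) (α : ℝ)
    {Ω' : Type*} [MeasurableSpace Ω'] (P' : Measure Ω')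
    (ρ : Ω' → ℝ) (Z W : ℝ → Ω' → ℝ) : Prop where
  isProb : IsProbabilityMeasure P'
  rhoLaw : Measure.map ρ P' = expMeasure (c1 P X α)
  zLaw : IsEsscher P X α P' Z
  wLaw : Measure.map (fun ω' => path W ω') P' = lawW P X α
  cadlagZ : ∀ᵐ ω' ∂P', Cadlag (path Z ω')
  cadlagW : ∀ᵐ ω' ∂P', Cadlag (path W ω')
  indepRho : IndepFun ρ (fun ω' => (path Z ω', path W ω')) P'
  indepZW : IndepFun (fun ω' => path Z ω') (fun ω' => path W ω') P'

/-- The pair `(ρ, W)` of independent limit objects (when `Z` is not needed). -/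
structure WRhoObjects (P : Measure Ω) (X : ℝ → Ω → ℝ) (α : ℝ)
    {Ω' : Type*} [MeasurableSpace Ω'] (P' : Measure Ω')
    (ρ : Ω' → ℝ) (W : ℝ → Ω' → ℝ) : Prop where
  isProb : IsProbabilityMeasure P'
  rhoLaw : Measure.map ρ P' = expMeasure (c1 P X α)
  wLaw : Measure.map (fun ω' => path W ω') P' = lawW P X α
  cadlagW : ∀ᵐ ω' ∂P', Cadlag (path W ω')
  indep : IndepFun ρ (fun ω' => path W ω') P'

/-! ### The measures `μ_K` and `ν_x` on path space -/

/-- Path marginal of the measure `μ_K`: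
`μ_K(dw) = c₁ ∫_0^∞ 1(X_{t-} < K) e^{α X_{t-}} P(X_{[0,t)} ∈ dw) dt`. -/
def muK (P : Measure Ω) (X : ℝ → Ω → ℝ) (α K : ℝ) : Measure (ℝ → EReal) :=
  Measure.bind (volume.restrict (Set.Ici (0:ℝ))) fun t =>
    Measure.map (fun ω => kill (path X ω) t)
      (P.withDensity fun ω =>
        if preVal (path X ω) t < K then
          ENNReal.ofReal (c1 P X α * Real.exp (α * preVal (path X ω) t)) else 0)

/-- Path marginal of the measure `μ = μ_∞`:
`μ(dw) = c₁ ∫_0^∞ e^{α X_{t-}} P(X_{[0,t)} ∈ dw) dt`. -/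
def muMeasure (P : Measure Ω) (X : ℝ → Ω → ℝ) (α : ℝ) : Measure (ℝ → EReal) :=
  Measure.bind (volume.restrict (Set.Ici (0:ℝ))) fun t =>
    Measure.map (fun ω => kill (path X ω) t)
      (P.withDensity fun ω =>
        ENNReal.ofReal (c1 P X α * Real.exp (α * preVal (path X ω) t)))

/-- Path marginal of the measure `ν_x`:
`ν_x(dw') = c₂ ∫ 1(z > -x) α e^{-α z} P_z(X ∈ dw'; τ(0) < ∞) dz`. -/
def nuX (P : Measure Ω) (X : ℝ → Ω → ℝ) (α x : ℝ) : Measure (ℝ → EReal) :=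
  Measure.bind
    ((volume : Measure ℝ).withDensity fun z =>
      if -x < z then ENNReal.ofReal (c2 P X α * α * Real.exp (-α * z)) else 0)
    fun z => Measure.map (fun ω => alive fun t => z + X t ω) (P.restrict (shiftRuin X z))

/-- The potential measure `V_X(dζ) = ∫_0^∞ P(X_t ∈ dζ) dt`. -/
def potential (P : Measure Ω) (X : ℝ → Ω → ℝ) : Measure ℝ :=
  Measure.bind (volume.restrict (Set.Ici (0:ℝ))) fun t => Measure.map (X t) P

/-- A real function that is left-continuous at every point has at most countably many
points of discontinuity. -/
private lemma countable_not_continuousAt_of_left_tendsto {f : ℝ → ℝ}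
    (hf : ∀ x : ℝ, Tendsto f (nhdsWithin x (Set.Iio x)) (nhds (f x))) :
    {x : ℝ | ¬ ContinuousAt f x}.Countable := by
  set S : ℕ → Set ℝ := fun n => {x | ∀ δ : ℝ, 0 < δ → ∃ y, x ≤ y ∧ y < x + δ ∧
    1 / (n + 1 : ℝ) ≤ |f y - f x|} with hSdef
  have hsub : {x : ℝ | ¬ ContinuousAt f x} ⊆ ⋃ n, S n := by
    intro x hx
    have hright : ¬ Tendsto f (nhdsWithin x (Set.Ici x)) (nhds (f x)) := by
      intro hr
      apply hx
      have h2 : Tendsto f (nhdsWithin x (Set.Iio x) ⊔ nhdsWithin x (Set.Ici x)) (nhds (f x)) :=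
        tendsto_sup.2 ⟨hf x, hr⟩
      rwa [nhdsLT_sup_nhdsGE] at h2
    obtain ⟨ε, hε, hfreq⟩ : ∃ ε > 0, ∃ᶠ y in nhdsWithin x (Set.Ici x), ε ≤ dist (f y) (f x) := by
      by_contra h
      push_neg at h
      refine hright (Metric.tendsto_nhds.2 fun ε hε => ?_)
      exact h ε hε
    obtain ⟨n, hn⟩ := exists_nat_one_div_lt hε
    refine Set.mem_iUnion.2 ⟨n, fun δ hδ => ?_⟩
    have hIco : Set.Ico x (x + δ) ∈ nhdsWithin x (Set.Ici x) :=
      Ico_mem_nhdsGE (by linarith)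
    obtain ⟨y, hdist, hy⟩ := (hfreq.and_eventually (eventually_of_mem hIco fun y hy => hy)).exists
    refine ⟨y, hy.1, hy.2, le_trans hn.le ?_⟩
    rwa [Real.dist_eq] at hdist
  have hcnt : ∀ n, (S n).Countable := by
    intro n
    have hεpos : (0 : ℝ) < 1 / (n + 1 : ℝ) := by positivity
    have key : ∀ x : ℝ, ∃ q : ℚ, x ∈ S n →
        ((q : ℝ) < x ∧ ∀ y ∈ S n, (q : ℝ) < y → ¬ y < x) := by
      intro x
      by_cases hx : x ∈ S n
      · have h2 : ∀ᶠ t in nhdsWithin x (Set.Iio x), |f t - f x| < 1 / (n + 1 : ℝ) / 2 := by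
          have h3 := Metric.tendsto_nhds.mp (hf x) (1 / (n + 1 : ℝ) / 2) (by positivity)
          simpa [Real.dist_eq] using h3
        obtain ⟨u, hu, hsub'⟩ := mem_nhdsLT_iff_exists_Ioo_subset.mp h2
        obtain ⟨q, hq1, hq2⟩ := exists_rat_btwn (Set.mem_Iio.mp hu)
        refine ⟨q, fun _ => ⟨hq2, fun y hy hqy hyx => ?_⟩⟩
        have hyu : u < y := lt_trans hq1 hqy
        obtain ⟨y', hy'1, hy'2, hy'3⟩ := hy (x - y) (by linarith)
        have h1 : |f y - f x| < 1 / (n + 1 : ℝ) / 2 := hsub' ⟨hyu, hyx⟩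
        have h2' : |f y' - f x| < 1 / (n + 1 : ℝ) / 2 := hsub' ⟨by linarith, by linarith⟩
        have htri : |f y' - f y| ≤ |f y' - f x| + |f x - f y| := abs_sub_le _ _ _
        rw [abs_sub_comm (f x) (f y)] at htri
        linarith
      · exact ⟨0, fun h => absurd h hx⟩
    choose Q hQ using key
    have hsub2 : S n ⊆ ⋃ q : ℚ, {x ∈ S n | Q x = q} :=
      fun x hx => Set.mem_iUnion.2 ⟨Q x, hx, rfl⟩
    refine Set.Countable.mono hsub2 (Set.countable_iUnion fun q => ?_)
    refine Set.Subsingleton.countable fun x hx y hy => ?_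
    obtain ⟨hxS, hxQ⟩ := hx
    obtain ⟨hyS, hyQ⟩ := hy
    by_contra hne
    rcases lt_or_gt_of_ne hne with h | h
    · exact (hQ y hyS).2 x hxS (by rw [hyQ, ← hxQ]; exact (hQ x hxS).1) h
    · exact (hQ x hxS).2 y hyS (by rw [hxQ, ← hyQ]; exact (hQ y hyS).1) h
  exact Set.Countable.mono hsub (Set.countable_iUnion hcnt)

/-- **Proposition 4.4.**  If `H` is product measurable, satisfies (f1), and for each
`w ∈ D` the function `H(w,·)` is continuous from below on `{τ_0(w') < ∞}` a.s. `P_z`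
for every `z`, then (f2) holds: `z ↦ G(w,z)` is continuous at all but countably many
`z`, hence continuous Lebesgue-a.e. -/
theorem continuity_from_below_implies_f2
    {Ω : Type*} [MeasurableSpace Ω]
    (P : Measure Ω) (X : ℝ → Ω → ℝ) (hlevy : IsLevy P X)
    (hns : NotNegSubordinator P X) (α : ℝ) (hα : 0 < α)
    (H : (ℝ → EReal) → (ℝ → EReal) → ℝ)
    (hmeas : Measurable (Function.uncurry H))
    (hf1 : ∃ θ : ℝ, 0 ≤ θ ∧ θ < α ∧ ∃ C : ℝ, ∀ v v' : ℝ → EReal,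
      |H v v'| * Real.exp (θ * min (preDeath v) 0) ≤ C)
    (hbelow : ∀ v : ℝ → EReal, ∀ z : ℝ, ∀ᵐ ω ∂P, ω ∈ shiftRuin X z →
      Tendsto (fun ε : ℝ => H v (alive fun t => z + X t ω - ε))
        (nhdsWithin 0 (Set.Ioi 0)) (nhds (H v (alive fun t => z + X t ω)))) :
    ∀ v : ℝ → EReal,
      {z : ℝ | ¬ ContinuousAt (GFun P X H v) z}.Countable ∧
        ∀ᵐ z ∂(volume : Measure ℝ), ContinuousAt (GFun P X H v) z := by
  intro v
  haveI : IsProbabilityMeasure P := hlevy.isProb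
  obtain ⟨θ, hθ0, hθα, C, hC⟩ := hf1
  set B : ℝ := C * Real.exp (-(θ * min (preDeath v) 0)) with hBdef
  have hHbound : ∀ v' : ℝ → EReal, |H v v'| ≤ B := by
    intro v'
    calc |H v v'|
        = |H v v'| * Real.exp (θ * min (preDeath v) 0) *
            Real.exp (-(θ * min (preDeath v) 0)) := by
          rw [mul_assoc, ← Real.exp_add]; simp
      _ ≤ C * Real.exp (-(θ * min (preDeath v) 0)) :=
          mul_le_mul_of_nonneg_right (hC v v') (Real.exp_pos _).le
  have hB0 : 0 ≤ B := le_trans (abs_nonneg _) (hHbound v)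
  -- a measurable version of the ruin event, via rational times
  set M : ℝ → Set Ω := fun z => {ω | ∃ q : ℚ, 0 ≤ (q : ℝ) ∧ 0 < z + X (q : ℝ) ω} with hMdef
  have hM : ∀ z, MeasurableSet (M z) := by
    intro z
    have hMeq : M z = ⋃ q : ℚ, {ω | 0 ≤ (q : ℝ) ∧ 0 < z + X (q : ℝ) ω} := by
      ext ω; simp [hMdef]
    rw [hMeq]
    refine MeasurableSet.iUnion fun q => ?_
    by_cases hq : 0 ≤ (q : ℝ)
    · have : {ω | 0 ≤ (q : ℝ) ∧ 0 < z + X (q : ℝ) ω} = {ω | (0:ℝ) < z + X (q : ℝ) ω} := by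
        ext ω; simp [hq]
      rw [this]
      exact measurableSet_lt measurable_const (measurable_const.add (hlevy.meas _))
    · have : {ω | 0 ≤ (q : ℝ) ∧ 0 < z + X (q : ℝ) ω} = ∅ := by
        ext ω; simp [hq]
      rw [this]; exact MeasurableSet.empty
  have hMsub : ∀ z, M z ⊆ shiftRuin X z := by
    rintro z ω ⟨q, hq0, hq⟩
    exact ⟨(q : ℝ), hq0, hq⟩
  have hMae : ∀ z, shiftRuin X z =ᵐ[P] M z := by
    intro z
    rw [eventuallyEq_set]
    filter_upwards [hlevy.cadlag] with ω hcad
    constructor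
    · rintro ⟨s, hs0, hs⟩
      have hct : ContinuousWithinAt (path X ω) (Set.Ici s) s := hcad.1 s hs0
      have hIoi : Set.Ioi (-z) ∈ nhds (path X ω s) := by
        refine Ioi_mem_nhds ?_
        simp only [path]
        linarith
      have hmem : (path X ω) ⁻¹' (Set.Ioi (-z)) ∈ nhdsWithin s (Set.Ici s) := hct hIoi
      rw [mem_nhdsGE_iff_exists_Ico_subset] at hmem
      obtain ⟨u, hu, hsubI⟩ := hmem
      obtain ⟨q, hq1, hq2⟩ := exists_rat_btwn (Set.mem_Ioi.mp hu)
      have hqmem : (q : ℝ) ∈ (path X ω) ⁻¹' (Set.Ioi (-z)) := hsubI ⟨hq1.le, hq2⟩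
      refine ⟨q, by linarith, ?_⟩
      have : -z < X (q : ℝ) ω := hqmem
      linarith
    · exact fun h => hMsub z h
  -- the integrand as an indicator function
  set F : ℝ → Ω → ℝ :=
    fun y => (M y).indicator (fun ω => H v (alive fun t => y + X t ω)) with hFdef
  have hma : ∀ y : ℝ, Measurable fun ω => alive fun t => y + X t ω := by
    intro y
    apply measurable_pi_lambda
    intro t
    exact measurable_coe_real_ereal.comp (measurable_const.add (hlevy.meas t))
  have hHm : Measurable (H v) := hmeas.comp measurable_prodMk_left
  have hFmeas : ∀ y, Measurable (F y) := fun y => (hHm.comp (hma y)).indicator (hM y)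
  have hGeq : GFun P X H v = fun y => ∫ ω, F y ω ∂P := by
    funext y
    unfold GFun
    rw [Measure.restrict_congr_set (hMae y), ← integral_indicator (hM y)]
  -- left continuity at every z by dominated convergence
  have hleft : ∀ z : ℝ, Tendsto (fun y => ∫ ω, F y ω ∂P) (nhdsWithin z (Set.Iio z))
      (nhds (∫ ω, F z ω ∂P)) := by
    intro z
    refine tendsto_integral_filter_of_dominated_convergence (fun _ => B)
      (Filter.Eventually.of_forall fun y => (hFmeas y).aestronglyMeasurable)
      (Filter.Eventually.of_forall fun y => Filter.Eventually.of_forall fun ω => ?_)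
      (integrable_const B) ?_
    · by_cases hω : ω ∈ M y
      · simpa [hFdef, Set.indicator_of_mem hω, Real.norm_eq_abs] using hHbound _
      · simp [hFdef, Set.indicator_of_notMem hω, hB0]
    · filter_upwards [hbelow v z] with ω hω
      have hm : Tendsto (fun y : ℝ => z - y) (nhdsWithin z (Set.Iio z))
          (nhdsWithin 0 (Set.Ioi 0)) := by
        rw [tendsto_nhdsWithin_iff]
        constructor
        · have h1 : Tendsto (fun y : ℝ => z - y) (nhds z) (nhds (z - z)) :=
            (continuous_const.sub continuous_id).tendsto z
          simpa using h1.mono_left nhdsWithin_le_nhds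
        · filter_upwards [self_mem_nhdsWithin] with y hy
          exact sub_pos.mpr (Set.mem_Iio.mp hy)
      have hcomp : (fun y => F y ω) = (fun ε => F (z - ε) ω) ∘ (fun y : ℝ => z - y) := by
        funext y; simp [Function.comp, sub_sub_cancel]
      rw [hcomp]
      refine Tendsto.comp ?_ hm
      by_cases hmem : ω ∈ M z
      · obtain ⟨q, hq0, hqpos⟩ := id hmem
        have hF : F z ω = H v (alive fun t => z + X t ω) :=
          Set.indicator_of_mem hmem _
        rw [hF]
        refine (hω (hMsub z hmem)).congr' ?_
        filter_upwards [Ioo_mem_nhdsGT hqpos] with ε hε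
        obtain ⟨hε1, hε2⟩ := hε
        have hmem' : ω ∈ M (z - ε) := ⟨q, hq0, by linarith⟩
        show H v (alive fun t => z + X t ω - ε) = F (z - ε) ω
        rw [show F (z - ε) ω = H v (alive fun t => z - ε + X t ω) from
          Set.indicator_of_mem hmem' _]
        congr 1
        funext t
        show ((z + X t ω - ε : ℝ) : EReal) = ((z - ε + X t ω : ℝ) : EReal)
        exact congrArg _ (by ring)
      · have hF : F z ω = 0 := Set.indicator_of_notMem hmem _
        rw [hF]
        refine tendsto_const_nhds.congr' ?_
        filter_upwards [self_mem_nhdsWithin] with ε hε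
        have hmem' : ω ∉ M (z - ε) := by
          rintro ⟨q, hq0, hq⟩
          refine hmem ⟨q, hq0, ?_⟩
          have : (0:ℝ) < ε := hε
          linarith
        exact (Set.indicator_of_notMem hmem' _).symm
  have hgleft : ∀ z : ℝ, Tendsto (GFun P X H v) (nhdsWithin z (Set.Iio z))
      (nhds (GFun P X H v z)) := by
    intro z
    rw [hGeq]
    exact hleft z
  have hcount : {z : ℝ | ¬ ContinuousAt (GFun P X H v) z}.Countable :=
    countable_not_continuousAt_of_left_tendsto hgleft
  refine ⟨hcount, ?_⟩
  rw [ae_iff]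
  exact hcount.measure_zero _

end GriffinMaller
end
end

section
/- Convolution bound for dominated distributions (Lemma 8.1). Let F and G be distribution functions on the real line with F(0−)=G(0−)=0, suppose F belongs to the convolution equivalent class S^(α) for some α>0, and suppose limsup_{u→∞} Ḡ(u)/F̄(u) < ∞, where F̄=1−F and Ḡ=1−G. Then limsup_{u→∞} ∫ [F̄(u−y)/F̄(u)] G(dy) < ∞. -/
open MeasureTheory ProbabilityTheory Filter Set Real
open scoped ENNReal NNReal

noncomputable section

namespace GriffinMaller

/-! ### Lévy processes -/

variable {Ω : Type*} [MeasurableSpace Ω]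

/-- Tail of a convolution via the first marginal. -/
lemma mconv_Ioi (μ ν : Measure ℝ) [SFinite μ] [SFinite ν] (u : ℝ) :
    mconv μ ν (Set.Ioi u) = ∫⁻ x, ν (Set.Ioi (u - x)) ∂μ := by
  have hmeas : Measurable fun p : ℝ × ℝ => p.1 + p.2 := measurable_fst.add measurable_snd
  rw [mconv, Measure.map_apply hmeas measurableSet_Ioi,
    Measure.prod_apply (hmeas measurableSet_Ioi)]
  refine lintegral_congr fun x => ?_
  congr 1
  ext y
  simp [sub_lt_iff_lt_add']

/-- Tail of a convolution via the second marginal. -/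
lemma mconv_Ioi' (μ ν : Measure ℝ) [SFinite μ] [SFinite ν] (u : ℝ) :
    mconv μ ν (Set.Ioi u) = ∫⁻ y, μ (Set.Ioi (u - y)) ∂ν := by
  have hmeas : Measurable fun p : ℝ × ℝ => p.1 + p.2 := measurable_fst.add measurable_snd
  rw [mconv, Measure.map_apply hmeas measurableSet_Ioi,
    Measure.prod_apply_symm (hmeas measurableSet_Ioi)]
  refine lintegral_congr fun y => ?_
  congr 1
  ext x
  simp [sub_lt_iff_lt_add]

lemma tail_meas (μ : Measure ℝ) (u : ℝ) :
    Measurable fun x : ℝ => μ (Set.Ioi (u - x)) := by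
  have : Monotone fun x : ℝ => μ (Set.Ioi (u - x)) := by
    intro a b hab
    exact measure_mono (Set.Ioi_subset_Ioi (by linarith))
  exact this.measurable

/-- **Lemma 8.1 (Convolution bound for dominated distributions).**  Let `F, G` be
distributions on `[0,∞)` with `F ∈ S^(α)` and `limsup_{u→∞} Ḡ(u)/F̄(u) < ∞`.  Then
`limsup_{u→∞} ∫ F̄(u-y)/F̄(u) G(dy) < ∞`. -/

theorem convolution_bound
    (α : ℝ) (hα : 0 < α) (mF mG : Measure ℝ)
    (hF : IsConvEquiv α mF)
    (hG : IsProbabilityMeasure mG) (hG0 : mG (Set.Iio 0) = 0)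
    (hdom : IsBoundedUnder (· ≤ ·) atTop fun u => mtail mG u / mtail mF u) :
    IsBoundedUnder (· ≤ ·) atTop
      fun u => ∫ y, mtail mF (u - y) / mtail mF u ∂mG := by
  classical
  obtain ⟨hFprob, hF0, hFpos, hFshift, L, hL⟩ := hF
  haveI : IsProbabilityMeasure mF := hFprob
  haveI : IsProbabilityMeasure mG := hG
  -- extract the domination constant
  obtain ⟨C, hC⟩ := hdom
  rw [Filter.eventually_map] at hC
  obtain ⟨y₀, hy₀⟩ := Filter.eventually_atTop.1 hC
  set C' : ℝ := max C 0 with hC'def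
  have hC'nn : 0 ≤ C' := le_max_right C 0
  have hGF : ∀ v : ℝ, y₀ ≤ v → mtail mG v ≤ C' * mtail mF v := by
    intro v hv
    have h1 : mtail mG v / mtail mF v ≤ C' := le_trans (hy₀ v hv) (le_max_left C 0)
    exact (div_le_iff₀ (hFpos v)).1 h1
  have hGFe : ∀ v : ℝ, y₀ ≤ v → mG (Set.Ioi v) ≤ ENNReal.ofReal C' * mF (Set.Ioi v) := by
    intro v hv
    rw [← ENNReal.ofReal_toReal (measure_ne_top mG (Set.Ioi v)),
      ← ENNReal.ofReal_toReal (measure_ne_top mF (Set.Ioi v)),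
      ← ENNReal.ofReal_mul hC'nn]
    exact ENNReal.ofReal_le_ofReal (hGF v hv)
  -- pointwise bound
  have hpt : ∀ u x : ℝ, mG (Set.Ioi (u - x)) ≤
      ENNReal.ofReal C' * mF (Set.Ioi (u - x)) +
        (Set.Ioi (u - y₀)).indicator (fun _ => (1 : ℝ≥0∞)) x := by
    intro u x
    by_cases hx : x ≤ u - y₀
    · have hv : y₀ ≤ u - x := by linarith
      exact le_trans (hGFe _ hv) le_self_add
    · have hmem : x ∈ Set.Ioi (u - y₀) := lt_of_not_ge hx
      rw [Set.indicator_of_mem hmem]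
      exact le_trans prob_le_one le_add_self
  -- the convolution bound at the lintegral level
  have hkey : ∀ u : ℝ, (∫⁻ y, mF (Set.Ioi (u - y)) ∂mG) ≤
      ENNReal.ofReal C' * mconv mF mF (Set.Ioi u) + mF (Set.Ioi (u - y₀)) := by
    intro u
    have h1 : (∫⁻ y, mF (Set.Ioi (u - y)) ∂mG) = ∫⁻ x, mG (Set.Ioi (u - x)) ∂mF := by
      rw [← mconv_Ioi' mF mG u, mconv_Ioi mF mG u]
    rw [h1]
    calc (∫⁻ x, mG (Set.Ioi (u - x)) ∂mF)
        ≤ ∫⁻ x, (ENNReal.ofReal C' * mF (Set.Ioi (u - x)) +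
            (Set.Ioi (u - y₀)).indicator (fun _ => (1 : ℝ≥0∞)) x) ∂mF :=
          lintegral_mono (hpt u)
      _ = ENNReal.ofReal C' * (∫⁻ x, mF (Set.Ioi (u - x)) ∂mF) + mF (Set.Ioi (u - y₀)) := by
          rw [lintegral_add_left ((tail_meas mF u).const_mul _),
            lintegral_const_mul _ (tail_meas mF u), lintegral_indicator_const measurableSet_Ioi, one_mul]
      _ = ENNReal.ofReal C' * mconv mF mF (Set.Ioi u) + mF (Set.Ioi (u - y₀)) := by
          rw [← mconv_Ioi mF mF u]
  -- finiteness of the right-hand side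
  have hconv_le : ∀ u : ℝ, mconv mF mF (Set.Ioi u) ≤ 1 := by
    intro u
    rw [mconv_Ioi mF mF u]
    calc (∫⁻ x, mF (Set.Ioi (u - x)) ∂mF) ≤ ∫⁻ _, 1 ∂mF := lintegral_mono fun x => prob_le_one
      _ = 1 := by simp
  have hrhs_ne : ∀ u : ℝ,
      ENNReal.ofReal C' * mconv mF mF (Set.Ioi u) + mF (Set.Ioi (u - y₀)) ≠ ⊤ := by
    intro u
    refine ENNReal.add_ne_top.2 ⟨ENNReal.mul_ne_top ENNReal.ofReal_ne_top ?_, measure_ne_top _ _⟩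
    exact ne_top_of_le_ne_top ENNReal.one_ne_top (hconv_le u)
  -- real-valued main estimate, valid for every u
  have hmain : ∀ u : ℝ, (∫ y, mtail mF (u - y) / mtail mF u ∂mG) ≤
      (C' * mtail (mconv mF mF) u + mtail mF (u - y₀)) / mtail mF u := by
    intro u
    have hint : (∫ y, mtail mF (u - y) ∂mG) = (∫⁻ y, mF (Set.Ioi (u - y)) ∂mG).toReal := by
      simp only [mtail]
      exact integral_toReal (tail_meas mF u).aemeasurable
        (ae_of_all _ fun y => measure_lt_top _ _)
    have hrhsToReal :
        (ENNReal.ofReal C' * mconv mF mF (Set.Ioi u) + mF (Set.Ioi (u - y₀))).toReal =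
          C' * mtail (mconv mF mF) u + mtail mF (u - y₀) := by
      rw [ENNReal.toReal_add (ENNReal.mul_ne_top ENNReal.ofReal_ne_top
          (ne_top_of_le_ne_top ENNReal.one_ne_top (hconv_le u))) (measure_ne_top _ _),
        ENNReal.toReal_mul, ENNReal.toReal_ofReal hC'nn]
      rfl
    have hle : (∫ y, mtail mF (u - y) ∂mG) ≤
        C' * mtail (mconv mF mF) u + mtail mF (u - y₀) := by
      rw [hint, ← hrhsToReal]
      exact ENNReal.toReal_mono (hrhs_ne u) (hkey u)
    rw [integral_div]
    gcongr
    exact (hFpos u).le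
  -- eventual bounds for the two ratios
  have h1 : ∀ᶠ u in atTop, mtail (mconv mF mF) u / mtail mF u ≤ L + 1 :=
    hL.eventually (eventually_le_nhds (lt_add_one L))
  have h2 : ∀ᶠ u in atTop,
      mtail mF (u + -y₀) / mtail mF u ≤ Real.exp (-α * -y₀) + 1 :=
    (hFshift (-y₀)).eventually (eventually_le_nhds (lt_add_one _))
  refine ⟨C' * (L + 1) + (Real.exp (-α * -y₀) + 1), Filter.eventually_map.2 ?_⟩
  filter_upwards [h1, h2] with u hu1 hu2
  have hsub : u - y₀ = u + -y₀ := sub_eq_add_neg u y₀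
  calc (∫ y, mtail mF (u - y) / mtail mF u ∂mG)
      ≤ (C' * mtail (mconv mF mF) u + mtail mF (u - y₀)) / mtail mF u := hmain u
    _ = C' * (mtail (mconv mF mF) u / mtail mF u) + mtail mF (u - y₀) / mtail mF u := by
        ring
    _ ≤ C' * (L + 1) + (Real.exp (-α * -y₀) + 1) := by
        rw [hsub]
        gcongr


end GriffinMaller
end
end
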